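/- Let R be a commutative Noetherian ring, p a prime ideal of R, and r a positive integer. If there exist a finitely generated R-module M and a proper submodule N of M whose generalized prime ideal factorization is P_M(N) = p^r (i.e., M has an RPE filtration over N of length r in which every prime is p), then p^r ≠ p^{r-1}. -/

import Mathlib

variable {R : Type*} [CommRing R] {M : Type*} [AddCommGroup M] [Module R M]

/-- The colon submodule `(N :_M I) = {x ∈ M | I • x ⊆ N}`. -/
def colonSubmodule (N : Submodule R M) (I : Ideal R) : Submodule R M where
  carrier := {x | ∀ a ∈ I, a • x ∈ N}
  add_mem' := fun hx hy a ha => by simpa [smul_add] using N.add_mem (hx a ha) (hy a ha)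
  zero_mem' := fun a _ => by simp
  smul_mem' := fun c x hx a ha => by
    rw [smul_comm]
    exact N.smul_mem c (hx a ha)

/-- `K` is a `p`-prime extension of `N`, i.e. `N` is a `p`-prime submodule of `K`. -/
def IsPrimeExt (p : Ideal R) (N K : Submodule R M) : Prop :=
  N < K ∧ N.colon K = p ∧ ∀ a : R, ∀ x ∈ K, a • x ∈ N → x ∈ N ∨ a ∈ p

/-- The associated primes of `T / N` for submodules `N ≤ T ≤ M`. -/
def assOf (R : Type*) {M : Type*} [CommRing R] [AddCommGroup M] [Module R M]
    (N T : Submodule R M) : Set (Ideal R) :=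
  associatedPrimes R ↥(T.map N.mkQ)

/-- `K` is a maximal `p`-prime extension of `N` inside `T`. -/
def IsMaximalPrimeExtIn (T : Submodule R M) (p : Ideal R) (N K : Submodule R M) : Prop :=
  K ≤ T ∧ IsPrimeExt p N K ∧ ∀ L ≤ T, IsPrimeExt p N L → ¬ K < L

/-- `K` is a regular `p`-prime extension of `N` inside `T`: a maximal `p`-prime
extension where `p` is a maximal element of `Ass (T/N)`. -/
def IsRegularPrimeExtIn (T : Submodule R M) (p : Ideal R) (N K : Submodule R M) : Prop :=
  IsMaximalPrimeExtIn T p N K ∧ Maximal (· ∈ assOf R N T) p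

/-- A regular prime extension (RPE) filtration inside `T` with primes `p i`. -/
def IsRPEFiltrationIn (T : Submodule R M) {n : ℕ}
    (F : Fin (n + 1) → Submodule R M) (p : Fin n → Ideal R) : Prop :=
  ∀ i : Fin n, IsRegularPrimeExtIn T (p i) (F i.castSucc) (F i.succ)

/-- The generalized prime ideal factorization of `N` in `T` is given by the multiset `s`:
there is an RPE filtration of `T` over `N` whose multiset of primes is `s`. -/
def HasGPIF (N T : Submodule R M) (s : Multiset (Ideal R)) : Prop :=
  ∃ (n : ℕ) (F : Fin (n + 1) → Submodule R M) (p : Fin n → Ideal R),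
    F 0 = N ∧ F (Fin.last n) = T ∧ IsRPEFiltrationIn T F p ∧ (List.ofFn p : Multiset (Ideal R)) = s

lemma mem_colonSubmodule {N : Submodule R M} {I : Ideal R} {x : M} :
    x ∈ colonSubmodule N I ↔ ∀ a ∈ I, a • x ∈ N := Iff.rfl

lemma colonSubmodule_one (N : Submodule R M) : colonSubmodule N (1 : Ideal R) = N := by
  ext x
  constructor
  · intro hx
    simpa using hx 1 (by simp)
  · intro hx a _
    exact N.smul_mem a hx

lemma colonSubmodule_mul (N : Submodule R M) (I J : Ideal R) :
    colonSubmodule N (I * J) = colonSubmodule (colonSubmodule N I) J := by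
  ext x
  constructor
  · intro hx b hb a ha
    rw [smul_smul]
    exact hx _ (Ideal.mul_mem_mul ha hb)
  · intro hx c hc
    refine Submodule.smul_induction_on hc ?_ ?_
    · intro a ha b hb
      exact (smul_smul a b x) ▸ hx b hb a ha
    · intro c d hc' hd'
      simpa [add_smul] using N.add_mem hc' hd'

/-- A regular `p`-prime extension of `L` in `⊤` equals the colon submodule `(L : p)`. -/
lemma regularPrimeExt_eq_colon [IsNoetherianRing R] {p : Ideal R} {L K : Submodule R M}
    (h : IsRegularPrimeExtIn ⊤ p L K) : K = colonSubmodule L p := by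
  obtain ⟨⟨-, ⟨hLK, hcolon, _⟩, hmaxext⟩, hmaxass⟩ := h
  have hKS : K ≤ colonSubmodule L p := by
    intro x hx a ha
    rw [← hcolon] at ha
    exact Submodule.mem_colon.mp ha x hx
  -- annihilator argument
  have hSprime : ∀ a : R, ∀ x ∈ colonSubmodule L p, a • x ∈ L → x ∈ L ∨ a ∈ p := by
    intro a x hx hax
    by_cases hxL : x ∈ L
    · exact Or.inl hxL
    right
    have hmem : L.mkQ x ∈ (⊤ : Submodule R M).map L.mkQ := ⟨x, trivial, rfl⟩
    set e : ↥((⊤ : Submodule R M).map L.mkQ) := ⟨L.mkQ x, hmem⟩ with he_def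
    have he : e ≠ 0 := by
      intro h0
      apply hxL
      have : L.mkQ x = 0 := congrArg Subtype.val h0
      simpa [Submodule.Quotient.mk_eq_zero] using this
    have hsmul : ∀ b : R, b • x ∈ L → b • e = 0 := by
      intro b hb
      apply Subtype.ext
      show b • L.mkQ x = 0
      rw [← map_smul, Submodule.mkQ_apply, Submodule.Quotient.mk_eq_zero]
      exact hb
    obtain ⟨q, hq, hle⟩ := exists_le_isAssociatedPrime_of_isNoetherianRing R e he
    have hpq : p ≤ q := by
      refine le_trans ?_ hle
      intro b hb
      rw [Submodule.mem_colon_singleton, Submodule.mem_bot]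
      exact hsmul b (hx b hb)
    have hqp : q ≤ p := hmaxass.2 hq hpq
    apply hqp
    apply hle
    rw [Submodule.mem_colon_singleton, Submodule.mem_bot]
    exact hsmul a hax
  have hS : IsPrimeExt p L (colonSubmodule L p) := by
    refine ⟨lt_of_lt_of_le hLK hKS, le_antisymm ?_ ?_, hSprime⟩
    · exact le_trans (Submodule.colon_mono le_rfl hKS) (le_of_eq hcolon)
    · intro b hb
      rw [Submodule.mem_colon]
      intro x hx
      exact hx b hb
  exact (hKS.lt_or_eq).resolve_left (hmaxext _ le_top hS)

/-- If `p^r` is the generalized prime ideal factorization of some proper submodule `N`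
of a finitely generated module `M` (i.e. there is an RPE filtration of `M` over `N` of
length `r` all of whose primes are `p`), then `p^r ≠ p^(r-1)`. -/
theorem pow_ne_pow_pred_of_gpif {R : Type*} [CommRing R] [IsNoetherianRing R]
    {M : Type*} [AddCommGroup M] [Module R M] [Module.Finite R M]
    (p : Ideal R) (hp : p.IsPrime) (r : ℕ) (hr : 0 < r)
    (N : Submodule R M) (hN : N ≠ ⊤)
    (h : HasGPIF N ⊤ (Multiset.replicate r p)) :
    p ^ r ≠ p ^ (r - 1) := by
  obtain ⟨n, F, q, hF0, hFlast, hfilt, hq⟩ := h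
  have hn : n = r := by
    have := congrArg Multiset.card hq
    simpa using this
  subst hn
  have hqi : ∀ i, q i = p := by
    intro i
    exact Multiset.eq_of_mem_replicate (n := n) (a := p)
      (by rw [← hq]; exact Multiset.mem_coe.mpr ((List.mem_ofFn (f := q) (a := q i)).mpr ⟨i, rfl⟩))
  have key : ∀ i : Fin (n + 1), F i = colonSubmodule N (p ^ (i : ℕ)) := by
    intro i
    induction i using Fin.induction with
    | zero =>
      rw [show ((0 : Fin (n+1)) : ℕ) = 0 from rfl, pow_zero, colonSubmodule_one]
      exact hF0
    | succ i ih =>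
      have hreg := hfilt i
      rw [hqi i] at hreg
      have := regularPrimeExt_eq_colon hreg
      rw [this, ih]
      rw [← colonSubmodule_mul, ← pow_succ]
      simp
  intro heq
  have hlast : (⊤ : Submodule R M) = colonSubmodule N (p ^ n) := by
    rw [← hFlast]
    simpa using key (Fin.last n)
  have hn1 : 0 < n := hr
  set i0 : Fin n := ⟨n - 1, by omega⟩ with hi0
  have hlt : F i0.castSucc < F i0.succ := (hfilt i0).1.2.1.1
  have hsucc : i0.succ = Fin.last n := by
    apply Fin.ext
    simp [hi0, Fin.val_succ]
    omega
  have hcast : F i0.castSucc = colonSubmodule N (p ^ (n - 1)) := key i0.castSucc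
  rw [hsucc, hFlast, hcast, hlast, ← heq] at hlt
  exact lt_irrefl _ hlt
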